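/- (Strengthened in-weight criterion, generalizing Lemma 5 of the paper.) Assume that every u ∈ F admits a path from v0 to u, all of whose vertices lie in F, whose cost equals cost u. Let k ∉ F be a vertex such that D k ≤ (⨅ {D y : y ∉ F}) + (⨅ {w v k : E v k ∧ v ∉ F}), where the second infimum is over in-edges of k coming from unfixed vertices. Then D k = cost k. -/

import Mathlib

open scoped ENNReal

variable {V : Type*}

/-- `IsPath E v0 x p` means `p` is a finite sequence of vertices starting at `v0`,
ending at `x`, with consecutive vertices joined by edges of `E`. -/
def IsPath (E : V → V → Prop) (v0 x : V) (p : List V) : Prop :=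
  p.Chain' E ∧ p.head? = some v0 ∧ p.getLast? = some x

/-- The cost of a path: the sum of the weights of its consecutive edges. -/
noncomputable def pathCost (w : V → V → ℝ≥0∞) (p : List V) : ℝ≥0∞ :=
  ((p.zip p.tail).map fun q => w q.1 q.2).sum

/-- `cost E w v0 x` : the infimum of the costs of all paths from `v0` to `x`
(`∞` if `x` is unreachable from `v0`). -/
noncomputable def cost (E : V → V → Prop) (w : V → V → ℝ≥0∞) (v0 x : V) : ℝ≥0∞ :=
  ⨅ p : {p : List V // IsPath E v0 x p}, pathCost w p.1

/-- An `F`-path from `v0` to `x` : a path all of whose vertices other than the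
final vertex `x` lie in `F`. `Dfun E w v0 F x` is the infimum of the costs of
`F`-paths from `v0` to `x` (`∞` if no `F`-path to `x` exists). -/
noncomputable def Dfun (E : V → V → Prop) (w : V → V → ℝ≥0∞) (v0 : V) (F : Set V)
    (x : V) : ℝ≥0∞ :=
  ⨅ p : {p : List V // IsPath E v0 x p ∧ ∀ v ∈ p.dropLast, v ∈ F}, pathCost w p.1

lemma pathCost_cons_cons (w : V → V → ℝ≥0∞) (a b : V) (l : List V) :
    pathCost w (a :: b :: l) = w a b + pathCost w (b :: l) := by
  simp [pathCost]

lemma pathCost_le_append (w : V → V → ℝ≥0∞) :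
    ∀ l t : List V, pathCost w l ≤ pathCost w (l ++ t)
  | [], t => zero_le
  | [a], t => by simp [pathCost]
  | a :: b :: l, t => by
    rw [List.cons_append, List.cons_append, pathCost_cons_cons, pathCost_cons_cons]
    exact add_le_add_right (pathCost_le_append w (b :: l) t) _

lemma pathCost_concat (w : V → V → ℝ≥0∞) :
    ∀ (l : List V) (v x : V), l.getLast? = some v →
      pathCost w (l ++ [x]) = pathCost w l + w v x
  | [], v, x, h => by simp at h
  | [a], v, x, h => by
    simp only [List.getLast?_singleton, Option.some.injEq] at h
    subst h; simp [pathCost]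
  | a :: b :: l, v, x, h => by
    rw [List.cons_append, List.cons_append, pathCost_cons_cons, pathCost_cons_cons,
      ← List.cons_append (a := b) (as := l) (bs := [x]), pathCost_concat w (b :: l) v x (by simpa using h), add_assoc]

lemma head?_append_left {α} : ∀ (l t : List α), l ≠ [] → (l ++ t).head? = l.head?
  | [], _, h => absurd rfl h
  | _ :: _, _, _ => rfl

lemma exists_first_not {α} {P : α → Prop} :
    ∀ l : List α, (∃ a ∈ l, ¬ P a) →
    ∃ l₁ a l₂, l = l₁ ++ a :: l₂ ∧ (∀ b ∈ l₁, P b) ∧ ¬ P a := by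
  intro l
  induction l with
  | nil => rintro ⟨a, h, _⟩; simp at h
  | cons a l ih =>
    rintro ⟨b, hb, hPb⟩
    by_cases hPa : P a
    · obtain ⟨l₁, c, l₂, hl, h1, h2⟩ := ih ⟨b, by
        rcases List.mem_cons.1 hb with h | h
        · exact absurd hPa (h ▸ hPb)
        · exact h, hPb⟩
      refine ⟨a :: l₁, c, l₂, by rw [hl]; rfl, ?_, h2⟩
      rintro x hx
      rcases List.mem_cons.1 hx with rfl | hx
      exacts [hPa, h1 x hx]
    · exact ⟨[], a, l, rfl, by simp, hPa⟩

/-- Strengthened in-weight criterion (generalizing Lemma 5): with the second infimum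
taken only over in-edges of `k` coming from unfixed vertices. -/
theorem in_weight_criterion_unfixed [Fintype V] (E : V → V → Prop) (w : V → V → ℝ≥0∞)
    (hpos : ∀ u v, E u v → 0 < w u v) (hfin : ∀ u v, E u v → w u v < ⊤)
    (v0 : V) (F : Set V) (hv0 : v0 ∈ F)
    (hF : ∀ u ∈ F, ∃ p : List V, IsPath E v0 u p ∧ (∀ v ∈ p, v ∈ F) ∧
      pathCost w p = cost E w v0 u)
    (k : V) (hk : k ∉ F)
    (hD : Dfun E w v0 F k ≤
      (⨅ y : {y : V // y ∉ F}, Dfun E w v0 F y.1) +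
      (⨅ v : {v : V // E v k ∧ v ∉ F}, w v.1 k)) :
    Dfun E w v0 F k = cost E w v0 k := by
  refine le_antisymm (le_iInf fun pp => ?_)
    (le_iInf fun p => iInf_le_of_le ⟨p.1, p.2.1⟩ le_rfl)
  obtain ⟨p, hchain, hhead, hlast⟩ := pp
  by_cases hall : ∀ v ∈ p.dropLast, v ∈ F
  · exact iInf_le_of_le ⟨p, ⟨hchain, hhead, hlast⟩, hall⟩ le_rfl
  push_neg at hall
  set q := p.dropLast with hqdef
  have hpne : p ≠ [] := by rintro rfl; simp at hlast
  have hk' : p.getLast hpne = k := by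
    rw [List.getLast?_eq_getLast hpne, Option.some.injEq] at hlast; exact hlast
  have hpdecomp : q ++ [k] = p := by
    rw [← hk', hqdef]; exact List.dropLast_append_getLast hpne
  obtain ⟨q₁, y, q₂, hq, hq₁F, hyF⟩ := exists_first_not q hall
  have hqne : q ≠ [] := by rw [hq]; simp
  set v := q.getLast hqne with hvdef
  have hvlast : q.getLast? = some v := List.getLast?_eq_getLast hqne
  have hchain2 : (q ++ [k]).Chain' E := by rw [hpdecomp]; exact hchain
  obtain ⟨hchainq, -, hedge⟩ := List.isChain_append.1 hchain2
  have hEvk : E v k := hedge v hvlast k rfl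
  have hheadq : q.head? = some v0 := by
    rw [← hpdecomp, head?_append_left q [k] hqne] at hhead; exact hhead
  have hpathq : IsPath E v0 v q := ⟨hchainq, hheadq, hvlast⟩
  have hcostp : pathCost w p = pathCost w q + w v k := by
    rw [← hpdecomp]; exact pathCost_concat w q v k hvlast
  have hq' : q = (q₁ ++ [y]) ++ q₂ := by rw [hq]; simp
  have hchainr : (q₁ ++ [y]).Chain' E := (List.isChain_append.1 (hq' ▸ hchainq)).1
  have hheadr : (q₁ ++ [y]).head? = some v0 := by
    have h1 : ((q₁ ++ [y]) ++ q₂).head? = (q₁ ++ [y]).head? :=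
      head?_append_left _ _ (by simp)
    rw [← hq'] at h1; rw [← h1]; exact hheadq
  have hlastr : (q₁ ++ [y]).getLast? = some y := by simp
  have hdropr : ∀ x ∈ (q₁ ++ [y]).dropLast, x ∈ F := by
    intro x hx; rw [List.dropLast_concat] at hx; exact hq₁F x hx
  have hDy : Dfun E w v0 F y ≤ pathCost w (q₁ ++ [y]) :=
    iInf_le (fun p : {p : List V // IsPath E v0 y p ∧ ∀ v ∈ p.dropLast, v ∈ F} => pathCost w p.1)
      ⟨_, ⟨hchainr, hheadr, hlastr⟩, hdropr⟩
  have hry : pathCost w (q₁ ++ [y]) ≤ pathCost w q := by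
    rw [hq']; exact pathCost_le_append w _ q₂
  by_cases hvF : v ∈ F
  · obtain ⟨pv, hpv, hpvF, hpvcost⟩ := hF v hvF
    obtain ⟨hcv, hhv, hlv⟩ := hpv
    have hpvne : pv ≠ [] := by rintro rfl; simp at hlv
    have hpathk : IsPath E v0 k (pv ++ [k]) := by
      refine ⟨List.isChain_append.2 ⟨hcv, List.isChain_singleton _, ?_⟩, ?_, by simp⟩
      · intro x hx z hz
        rw [hlv] at hx
        obtain rfl : x = v := by
          simp only [Option.mem_def, Option.some.injEq] at hx; exact hx.symm
        obtain rfl : z = k := by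
          simp only [List.head?_cons, Option.mem_def, Option.some.injEq] at hz; exact hz.symm
        exact hEvk
      · rw [head?_append_left pv [k] hpvne]; exact hhv
    have hdropk : ∀ x ∈ (pv ++ [k]).dropLast, x ∈ F := by
      intro x hx; rw [List.dropLast_concat] at hx; exact hpvF x hx
    calc Dfun E w v0 F k ≤ pathCost w (pv ++ [k]) := iInf_le (fun p : {p : List V // IsPath E v0 k p ∧ ∀ v ∈ p.dropLast, v ∈ F} => pathCost w p.1) ⟨_, hpathk, hdropk⟩
      _ = pathCost w pv + w v k := pathCost_concat w pv v k hlv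
      _ = cost E w v0 v + w v k := by rw [hpvcost]
      _ ≤ pathCost w q + w v k := add_le_add_left (iInf_le (fun p : {p : List V // IsPath E v0 v p} => pathCost w p.1) ⟨q, hpathq⟩) _
      _ = pathCost w p := hcostp.symm
  · calc Dfun E w v0 F k
        ≤ (⨅ y : {y : V // y ∉ F}, Dfun E w v0 F y.1) +
          (⨅ v : {v : V // E v k ∧ v ∉ F}, w v.1 k) := hD
      _ ≤ pathCost w (q₁ ++ [y]) + w v k :=
          add_le_add (le_trans (iInf_le (fun y : {y : V // y ∉ F} => Dfun E w v0 F y.1) ⟨y, hyF⟩) hDy) (iInf_le (fun v : {v : V // E v k ∧ v ∉ F} => w v.1 k) ⟨v, hEvk, hvF⟩)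
      _ ≤ pathCost w q + w v k := add_le_add_left hry _
      _ = pathCost w p := hcostp.symm
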